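/- Global exponential stability of the zero dynamics (Theorem 1). Let f : E → ℝ and h : E → F₁ be continuously differentiable, let Φ : E → F₁ × F₂, Φ(x) = (h(x), q(x)), be a global C¹ diffeomorphism satisfying the orthonormality conditions, and suppose Dh(x)∘Dh(x)† is invertible for every x ∈ E. Define p(η) = Φ⁻¹(0, η) and f̃ = f ∘ p : F₂ → ℝ. Assume f̃ is ρ-strongly convex for some ρ > 0 and that η* ∈ F₂ satisfies ∇f̃(η*) = 0. Then every differentiable curve η : [0,∞) → F₂ satisfying the zero dynamics η'(t) = − Dq(p(η(t)))(∇f(p(η(t)))) for all t ≥ 0 obeys ‖η(t) − η*‖ ≤ e^{−ρ t} ‖η(0) − η*‖ for all t ≥ 0. -/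

import Mathlib

open scoped RealInnerProductSpace

set_option maxHeartbeats 1000000 in
/-- Theorem 1: Global exponential stability of the zero dynamics.
`E = ℝⁿ`, `F₁ = ℝᵐ`, `F₂ = ℝ^{n-m}`; `Φ = (h, q)` is a global C¹ diffeomorphism with
inverse `Ψ`, satisfying the orthonormality conditions, `Dh ∘ Dh†` invertible; with
`p η = Ψ (0, η)` and `f̃ = f ∘ p` being `ρ`-strongly convex with critical point `η*`,
every solution of the zero dynamics converges exponentially to `η*` with rate `ρ`. -/
theorem zero_dynamics_global_exponential_stability
    (n m : ℕ) (hm : 1 ≤ m) (hmn : m < n)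
    (f : EuclideanSpace ℝ (Fin n) → ℝ)
    (h : EuclideanSpace ℝ (Fin n) → EuclideanSpace ℝ (Fin m))
    (q : EuclideanSpace ℝ (Fin n) → EuclideanSpace ℝ (Fin (n - m)))
    (Ψ : EuclideanSpace ℝ (Fin m) × EuclideanSpace ℝ (Fin (n - m)) → EuclideanSpace ℝ (Fin n))
    (hf : ContDiff ℝ 1 f) (hh : ContDiff ℝ 1 h) (hq : ContDiff ℝ 1 q)
    (hΨ : ContDiff ℝ 1 Ψ)
    (hleft : ∀ x, Ψ (h x, q x) = x)
    (hright : ∀ p, (h (Ψ p), q (Ψ p)) = p)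
    (horth₁ : ∀ x, (fderiv ℝ q x) ∘L (ContinuousLinearMap.adjoint (fderiv ℝ q x))
      = ContinuousLinearMap.id ℝ (EuclideanSpace ℝ (Fin (n - m))))
    (horth₂ : ∀ x, (fderiv ℝ q x) ∘L (ContinuousLinearMap.adjoint (fderiv ℝ h x)) = 0)
    (hinv : ∀ x, IsUnit ((fderiv ℝ h x) ∘L (ContinuousLinearMap.adjoint (fderiv ℝ h x))))
    (ρ : ℝ) (hρ : 0 < ρ)
    (hconv : ∀ u v : EuclideanSpace ℝ (Fin (n - m)),
      f (Ψ (0, v)) ≥ f (Ψ (0, u)) + ⟪gradient (fun η => f (Ψ (0, η))) u, v - u⟫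
        + (ρ / 2) * ‖v - u‖ ^ 2)
    (ηstar : EuclideanSpace ℝ (Fin (n - m)))
    (hcrit : gradient (fun η => f (Ψ (0, η))) ηstar = 0)
    (η : ℝ → EuclideanSpace ℝ (Fin (n - m)))
    (hdyn : ∀ t, 0 ≤ t →
      HasDerivAt η (-(fderiv ℝ q (Ψ (0, η t))) (gradient f (Ψ (0, η t)))) t) :
    ∀ t, 0 ≤ t → ‖η t - ηstar‖ ≤ Real.exp (-ρ * t) * ‖η 0 - ηstar‖ := by
  -- Step 1: the zero-dynamics vector field is the negative gradient of the reduced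
  -- objective f̃ = f ∘ p, where p η = Ψ (0, η).
  set ft : EuclideanSpace ℝ (Fin (n - m)) → ℝ := fun η => f (Ψ (0, η)) with hft
  have grad_eq : ∀ u : EuclideanSpace ℝ (Fin (n - m)),
      gradient ft u = (fderiv ℝ q (Ψ (0, u))) (gradient f (Ψ (0, u))) := by
    intro u
    set x := Ψ (0, u) with hxdef
    have hx : (h x, q x) = ((0 : EuclideanSpace ℝ (Fin m)), u) := hright _
    set DΨ := fderiv ℝ Ψ (0, u) with hDΨ
    set A := (fderiv ℝ h x).prod (fderiv ℝ q x) with hA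
    set P := DΨ ∘L ContinuousLinearMap.inr ℝ (EuclideanSpace ℝ (Fin m))
      (EuclideanSpace ℝ (Fin (n - m))) with hP
    have hΨdiff : HasFDerivAt Ψ DΨ (0, u) := (hΨ.differentiable one_ne_zero _).hasFDerivAt
    have hAdiff : HasFDerivAt (fun y => (h y, q y)) A x :=
      HasFDerivAt.prodMk ((hh.differentiable one_ne_zero x).hasFDerivAt) ((hq.differentiable one_ne_zero x).hasFDerivAt)
    -- DΨ ∘ A = id (differentiate Ψ ∘ Φ = id)
    have hΨA : DΨ ∘L A = ContinuousLinearMap.id ℝ _ := by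
      have h1 : HasFDerivAt (fun y => Ψ (h y, q y)) (DΨ ∘L A) x := by
        have := hΨdiff
        rw [← hx] at this
        exact this.comp x hAdiff
      have h2 : HasFDerivAt (fun y => Ψ (h y, q y)) (ContinuousLinearMap.id ℝ _) x := by
        have heq : (fun y => Ψ (h y, q y)) = fun y => y := funext hleft
        rw [heq]; exact hasFDerivAt_id x
      exact h1.unique h2
    -- Dh ∘ Dq† = 0 (adjoint of the second orthonormality condition)
    have hhq : (fderiv ℝ h x) ∘L (ContinuousLinearMap.adjoint (fderiv ℝ q x)) = 0 := by
      have := congrArg ContinuousLinearMap.adjoint (horth₂ x)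
      rwa [ContinuousLinearMap.adjoint_comp, ContinuousLinearMap.adjoint_adjoint,
        map_zero] at this
    -- A ∘ Dq† = inr
    have hAq : A ∘L (ContinuousLinearMap.adjoint (fderiv ℝ q x))
        = ContinuousLinearMap.inr ℝ _ _ := by
      refine ContinuousLinearMap.ext fun v => ?_
      have e1 := congrFun (congrArg DFunLike.coe hhq) v
      have e2 := congrFun (congrArg DFunLike.coe (horth₁ x)) v
      simp only [ContinuousLinearMap.coe_comp', Function.comp_apply,
        ContinuousLinearMap.zero_apply, ContinuousLinearMap.coe_id', id_eq] at e1 e2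
      simp only [hA, ContinuousLinearMap.coe_comp', Function.comp_apply,
        ContinuousLinearMap.prod_apply, ContinuousLinearMap.inr_apply, e1, e2]
    -- A ∘ P = inr (differentiate Φ ∘ Ψ = id)
    have hAΨ : A ∘L DΨ = ContinuousLinearMap.id ℝ _ := by
      have h1 : HasFDerivAt (fun p => (h (Ψ p), q (Ψ p))) (A ∘L DΨ) (0, u) :=
        hAdiff.comp _ hΨdiff
      have h2 : HasFDerivAt (fun p => (h (Ψ p), q (Ψ p)))
          (ContinuousLinearMap.id ℝ _) (0, u) := by
        have heq : (fun p => (h (Ψ p), q (Ψ p))) = fun p => p := funext hright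
        rw [heq]; exact hasFDerivAt_id _
      exact h1.unique h2
    have hAP : A ∘L P = ContinuousLinearMap.inr ℝ _ _ := by
      rw [hP, ← ContinuousLinearMap.comp_assoc, hAΨ, ContinuousLinearMap.id_comp]
    -- hence P = Dq† (A is injective since DΨ ∘ A = id)
    have hPadj : P = ContinuousLinearMap.adjoint (fderiv ℝ q x) := by
      calc P = (DΨ ∘L A) ∘L P := by rw [hΨA, ContinuousLinearMap.id_comp]
      _ = DΨ ∘L (A ∘L P) := by rw [ContinuousLinearMap.comp_assoc]
      _ = DΨ ∘L (A ∘L ContinuousLinearMap.adjoint (fderiv ℝ q x)) := by rw [hAP, hAq]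
      _ = (DΨ ∘L A) ∘L ContinuousLinearMap.adjoint (fderiv ℝ q x) := by
          rw [ContinuousLinearMap.comp_assoc]
      _ = ContinuousLinearMap.adjoint (fderiv ℝ q x) := by
          rw [hΨA, ContinuousLinearMap.id_comp]
    -- chain rule: ∇f̃(u) = P† ∇f(x) = Dq(x) ∇f(x)
    have hpdiff : HasFDerivAt (fun η => Ψ ((0 : EuclideanSpace ℝ (Fin m)), η)) P u :=
      hΨdiff.comp u (hasFDerivAt_prodMk_right _ _)
    have hfdiff : HasFDerivAt f (fderiv ℝ f x) x := (hf.differentiable one_ne_zero x).hasFDerivAt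
    have hcomp : HasFDerivAt ft ((fderiv ℝ f x) ∘L P) u := hfdiff.comp u hpdiff
    have hgradf : HasGradientAt f (gradient f x) x := (hf.differentiable one_ne_zero x).hasGradientAt
    have hkey : HasGradientAt ft ((fderiv ℝ q x) (gradient f x)) u := by
      rw [hasGradientAt_iff_hasFDerivAt]
      refine hcomp.congr_fderiv (Eq.symm ?_)
      have h1 : fderiv ℝ f x = (InnerProductSpace.toDual ℝ _) (gradient f x) :=
        hgradf.hasFDerivAt.fderiv
      refine ContinuousLinearMap.ext fun v => ?_
      simp only [ContinuousLinearMap.coe_comp', Function.comp_apply, h1,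
        InnerProductSpace.toDual_apply_apply, hPadj]
      exact (ContinuousLinearMap.adjoint_inner_right (fderiv ℝ q x) _ _).symm
    exact hkey.gradient
  have hdyn' : ∀ t, 0 ≤ t → HasDerivAt η (-(gradient ft (η t))) t := by
    intro t ht
    rw [grad_eq (η t)]
    exact hdyn t ht
  -- Step 2: strong monotonicity of ∇f̃ at the critical point
  have mono : ∀ u : EuclideanSpace ℝ (Fin (n - m)),
      ρ * ‖u - ηstar‖ ^ 2 ≤ ⟪gradient ft u, u - ηstar⟫ := by
    intro u
    have h1 := hconv u ηstar
    have h2 := hconv ηstar u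
    rw [hcrit] at h2
    simp only [inner_zero_left] at h2
    have hn : ‖ηstar - u‖ = ‖u - ηstar‖ := norm_sub_rev _ _
    have hi : ⟪gradient ft u, ηstar - u⟫ = -⟪gradient ft u, u - ηstar⟫ := by
      rw [← inner_neg_right, neg_sub]
    rw [hn] at h1
    rw [hft] at hi
    rw [hi] at h1
    linarith
  -- Step 3: the Lyapunov function ‖η t − η*‖² e^{2ρt} is nonincreasing
  set φ : ℝ → ℝ := fun t => ‖η t - ηstar‖ ^ 2 * Real.exp (2 * ρ * t) with hφ
  have hφd : ∀ t, 0 ≤ t → HasDerivAt φ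
      ((⟪η t - ηstar, -(gradient ft (η t))⟫ + ⟪-(gradient ft (η t)), η t - ηstar⟫)
        * Real.exp (2 * ρ * t)
        + ‖η t - ηstar‖ ^ 2 * (Real.exp (2 * ρ * t) * (2 * ρ))) t := by
    intro t ht
    have hsub : HasDerivAt (fun t => η t - ηstar) (-(gradient ft (η t))) t :=
      (hdyn' t ht).sub_const ηstar
    have hnorm : HasDerivAt (fun t => ‖η t - ηstar‖ ^ 2)
        (⟪η t - ηstar, -(gradient ft (η t))⟫ + ⟪-(gradient ft (η t)), η t - ηstar⟫) t := by
      have hd := hsub.inner ℝ hsub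
      have heq : (fun t => ‖η t - ηstar‖ ^ 2) = fun t => ⟪η t - ηstar, η t - ηstar⟫ := by
        funext s; rw [real_inner_self_eq_norm_sq]
      rw [heq]
      exact hd
    have hexp : HasDerivAt (fun t => Real.exp (2 * ρ * t))
        (Real.exp (2 * ρ * t) * (2 * ρ)) t := by
      simpa using ((hasDerivAt_id t).const_mul (2 * ρ)).exp
    exact hnorm.mul hexp
  have hφanti : AntitoneOn φ (Set.Ici (0 : ℝ)) := by
    apply antitoneOn_of_deriv_nonpos (convex_Ici 0)
    · intro t ht
      exact ((hφd t ht).continuousAt).continuousWithinAt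
    · intro t ht
      rw [interior_Ici] at ht
      exact ((hφd t (le_of_lt ht)).differentiableAt).differentiableWithinAt
    · intro t ht
      rw [interior_Ici] at ht
      rw [(hφd t (le_of_lt ht)).deriv]
      have hmono := mono (η t)
      have hip : ⟪η t - ηstar, -(gradient ft (η t))⟫ = -⟪gradient ft (η t), η t - ηstar⟫ := by
        rw [inner_neg_right, real_inner_comm]
      have hip2 : ⟪-(gradient ft (η t)), η t - ηstar⟫ = -⟪gradient ft (η t), η t - ηstar⟫ := by
        rw [inner_neg_left]
      rw [hip, hip2]
      have hexp_pos : (0:ℝ) < Real.exp (2 * ρ * t) := Real.exp_pos _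
      nlinarith [hexp_pos, hmono]
  -- Step 4: conclude
  intro t ht
  have h0 : φ t ≤ φ 0 := hφanti (Set.self_mem_Ici) ht ht
  have hφ0 : φ 0 = ‖η 0 - ηstar‖ ^ 2 := by simp [hφ]
  have hφt : φ t = ‖η t - ηstar‖ ^ 2 * Real.exp (2 * ρ * t) := rfl
  have hexp_pos : (0:ℝ) < Real.exp (2 * ρ * t) := Real.exp_pos _
  have key : ‖η t - ηstar‖ ^ 2 ≤ (Real.exp (-ρ * t) * ‖η 0 - ηstar‖) ^ 2 := by
    have he : (Real.exp (-ρ * t)) ^ 2 = (Real.exp (2 * ρ * t))⁻¹ := by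
      rw [← Real.exp_nat_mul, ← Real.exp_neg]
      ring_nf
    rw [mul_pow, he]
    rw [hφt, hφ0] at h0
    rw [inv_mul_eq_div, le_div_iff₀ hexp_pos]
    linarith
  have h1 : (0:ℝ) ≤ ‖η t - ηstar‖ := norm_nonneg _
  have h2 : (0:ℝ) ≤ Real.exp (-ρ * t) * ‖η 0 - ηstar‖ :=
    mul_nonneg (Real.exp_pos _).le (norm_nonneg _)
  nlinarith [key, h1, h2]
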